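/- Let g be analytic near 0 with g(0)=0, g'(0)=1, and let G(x)=∫₀ˣ g(t)dt. Then the function x ↦ d/dx [G(x)/g(x)²] extends continuously to x=0 with limit -g''(0)/3. -/

import Mathlib

open Filter Set

open scoped Topology

theorem period_f0_limit (g : ℝ → ℝ) (hg : AnalyticAt ℝ g 0)
    (h0 : g 0 = 0) (h1 : deriv g 0 = 1)
    (G : ℝ → ℝ) (hG : ∀ x, G x = ∫ t in (0:ℝ)..x, g t) :
    Tendsto (fun x => deriv (fun y => G y / (g y) ^ 2) x) (nhdsWithin 0 {(0:ℝ)}ᶜ)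
      (nhds (-(iteratedDeriv 2 g 0) / 3)) := by
  obtain ⟨ε, εpos, hball⟩ : ∃ ε > 0, Metric.ball (0:ℝ) ε ⊆ {x | AnalyticAt ℝ g x} :=
    Metric.isOpen_iff.1 (isOpen_analyticAt ℝ g) 0 hg
  set B := Metric.ball (0:ℝ) ε with hBdef
  have hBmem : B ∈ 𝓝 (0:ℝ) := Metric.ball_mem_nhds 0 εpos
  have hBopen : IsOpen B := Metric.isOpen_ball
  have g0mem : (0:ℝ) ∈ B := Metric.mem_ball_self εpos
  have hA : AnalyticOnNhd ℝ g B := fun x hx => hball hx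
  set d1 := deriv g with hd1def
  set d2 := deriv d1 with hd2def
  set d3 := deriv d2 with hd3def
  set d4 := deriv d3 with hd4def
  have hA1 : AnalyticOnNhd ℝ d1 B := hA.deriv
  have hA2 : AnalyticOnNhd ℝ d2 B := hA1.deriv
  have hA3 : AnalyticOnNhd ℝ d3 B := hA2.deriv
  have hA4 : AnalyticOnNhd ℝ d4 B := hA3.deriv
  have hgd : ∀ x ∈ B, HasDerivAt g (d1 x) x := fun x hx =>
    (hA x hx).differentiableAt.hasDerivAt
  have hd1d : ∀ x ∈ B, HasDerivAt d1 (d2 x) x := fun x hx =>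
    (hA1 x hx).differentiableAt.hasDerivAt
  have hd2d : ∀ x ∈ B, HasDerivAt d2 (d3 x) x := fun x hx =>
    (hA2 x hx).differentiableAt.hasDerivAt
  have hd3d : ∀ x ∈ B, HasDerivAt d3 (d4 x) x := fun x hx =>
    (hA3 x hx).differentiableAt.hasDerivAt
  -- derivative of G
  have hGd : ∀ x ∈ B, HasDerivAt G (g x) x := by
    intro x hx
    have hx' : |x| < ε := by simpa [hBdef, Metric.mem_ball, Real.dist_eq] using hx
    have hsub : uIcc (0:ℝ) x ⊆ B := by
      intro y hy
      have hy' := mem_uIcc.1 hy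
      have hxx := abs_lt.1 hx'
      simp only [hBdef, Metric.mem_ball, Real.dist_eq, sub_zero]
      rw [abs_lt]
      rcases hy' with h | h <;> constructor <;> linarith [h.1, h.2]
    have hint : IntervalIntegrable g MeasureTheory.volume 0 x :=
      (hA.continuousOn.mono hsub).intervalIntegrable
    have hmeas : StronglyMeasurableAtFilter g (𝓝 x) MeasureTheory.volume :=
      AEStronglyMeasurable.stronglyMeasurableAtFilter_of_mem
        (hA.continuousOn.aestronglyMeasurable hBopen.measurableSet) (hBopen.mem_nhds hx)
    have h := intervalIntegral.integral_hasDerivAt_right hint hmeas (hA x hx).continuousAt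
    have hGeq : G = fun u => ∫ t in (0:ℝ)..u, g t := funext hG
    rw [hGeq]
    exact h
  have hG0 : G 0 = 0 := by simp [hG 0]
  -- the derivative chain
  have hN : ∀ x ∈ B, HasDerivAt (fun y => g y ^ 2 - 2 * G y * d1 y)
      (-2 * G x * d2 x) x := by
    intro x hx
    have h := ((hgd x hx).fun_pow 2).fun_sub (((hGd x hx).const_mul (2:ℝ)).fun_mul (hd1d x hx))
    refine h.congr_deriv ?_
    push_cast
    ring
  have hD : ∀ x ∈ B, HasDerivAt (fun y => g y ^ 3) (3 * g x ^ 2 * d1 x) x := by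
    intro x hx
    have h := (hgd x hx).fun_pow 3
    refine h.congr_deriv ?_
    norm_num
  have hN1 : ∀ x ∈ B, HasDerivAt (fun y => -2 * G y * d2 y)
      (-2 * g x * d2 x - 2 * G x * d3 x) x := by
    intro x hx
    have h := ((hGd x hx).const_mul (-2:ℝ)).fun_mul (hd2d x hx)
    refine h.congr_deriv ?_
    ring
  have hD1 : ∀ x ∈ B, HasDerivAt (fun y => 3 * g y ^ 2 * d1 y)
      (6 * g x * d1 x ^ 2 + 3 * g x ^ 2 * d2 x) x := by
    intro x hx
    have h := (((hgd x hx).fun_pow 2).const_mul (3:ℝ)).fun_mul (hd1d x hx)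
    refine h.congr_deriv ?_
    push_cast
    ring
  have hN2 : ∀ x ∈ B, HasDerivAt (fun y => -2 * g y * d2 y - 2 * G y * d3 y)
      (-2 * d1 x * d2 x - 4 * g x * d3 x - 2 * G x * d4 x) x := by
    intro x hx
    have h := (((hgd x hx).const_mul (-2:ℝ)).fun_mul (hd2d x hx)).fun_sub
      (((hGd x hx).const_mul (2:ℝ)).fun_mul (hd3d x hx))
    refine h.congr_deriv ?_
    ring
  have hD2 : ∀ x ∈ B, HasDerivAt (fun y => 6 * g y * d1 y ^ 2 + 3 * g y ^ 2 * d2 y)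
      (6 * d1 x ^ 3 + 18 * g x * d1 x * d2 x + 3 * g x ^ 2 * d3 x) x := by
    intro x hx
    have h := (((hgd x hx).const_mul (6:ℝ)).fun_mul ((hd1d x hx).fun_pow 2)).fun_add
      ((((hgd x hx).fun_pow 2).const_mul (3:ℝ)).fun_mul (hd2d x hx))
    refine h.congr_deriv ?_
    push_cast
    ring
  -- eventual membership and nonvanishing
  have hBev : ∀ᶠ x in 𝓝[≠] (0:ℝ), x ∈ B :=
    eventually_of_mem (mem_nhdsWithin_of_mem_nhds hBmem) fun x hx => hx
  have hgne : ∀ᶠ x in 𝓝[≠] (0:ℝ), g x ≠ 0 := by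
    have hd : HasDerivAt g 1 0 := by
      have := hgd 0 g0mem
      rwa [show d1 0 = 1 from h1] at this
    rw [hasDerivAt_iff_tendsto_slope] at hd
    have h2 := hd.eventually_ne (by norm_num : (1:ℝ) ≠ 0)
    filter_upwards [h2] with x hx
    intro hgx
    apply hx
    simp [slope_def_field, hgx, h0]
  have hd1ne : ∀ᶠ x in 𝓝 (0:ℝ), d1 x ≠ 0 := by
    have hne : d1 0 ≠ 0 := by rw [h1]; norm_num
    exact (hA1 0 g0mem).continuousAt.eventually_ne hne
  -- tendsto-to-zero facts
  have tN : Tendsto (fun y => g y ^ 2 - 2 * G y * d1 y) (𝓝[≠] (0:ℝ)) (𝓝 0) := by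
    have h := ((hN 0 g0mem).continuousAt.tendsto).mono_left (nhdsWithin_le_nhds (s := {(0:ℝ)}ᶜ))
    simpa [h0, hG0] using h
  have tD : Tendsto (fun y => g y ^ 3) (𝓝[≠] (0:ℝ)) (𝓝 0) := by
    have h := ((hD 0 g0mem).continuousAt.tendsto).mono_left (nhdsWithin_le_nhds (s := {(0:ℝ)}ᶜ))
    simpa [h0] using h
  have tN1 : Tendsto (fun y => -2 * G y * d2 y) (𝓝[≠] (0:ℝ)) (𝓝 0) := by
    have h := ((hN1 0 g0mem).continuousAt.tendsto).mono_left (nhdsWithin_le_nhds (s := {(0:ℝ)}ᶜ))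
    simpa [hG0] using h
  have tD1 : Tendsto (fun y => 3 * g y ^ 2 * d1 y) (𝓝[≠] (0:ℝ)) (𝓝 0) := by
    have h := ((hD1 0 g0mem).continuousAt.tendsto).mono_left (nhdsWithin_le_nhds (s := {(0:ℝ)}ᶜ))
    simpa [h0] using h
  have tN2 : Tendsto (fun y => -2 * g y * d2 y - 2 * G y * d3 y) (𝓝[≠] (0:ℝ)) (𝓝 0) := by
    have h := ((hN2 0 g0mem).continuousAt.tendsto).mono_left (nhdsWithin_le_nhds (s := {(0:ℝ)}ᶜ))
    simpa [h0, hG0] using h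
  have tD2 : Tendsto (fun y => 6 * g y * d1 y ^ 2 + 3 * g y ^ 2 * d2 y) (𝓝[≠] (0:ℝ)) (𝓝 0) := by
    have h := ((hD2 0 g0mem).continuousAt.tendsto).mono_left (nhdsWithin_le_nhds (s := {(0:ℝ)}ᶜ))
    simpa [h0] using h
  -- nonvanishing of the denominators' derivatives
  have hD1ne : ∀ᶠ x in 𝓝[≠] (0:ℝ), 3 * g x ^ 2 * d1 x ≠ 0 := by
    filter_upwards [hgne, eventually_nhdsWithin_of_eventually_nhds hd1ne] with x hx hx1
    positivity
  have hD2ne : ∀ᶠ x in 𝓝[≠] (0:ℝ),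
      6 * g x * d1 x ^ 2 + 3 * g x ^ 2 * d2 x ≠ 0 := by
    have hcont : ContinuousAt (fun x => 2 * d1 x ^ 2 + g x * d2 x) 0 := by
      exact (((hA1 0 g0mem).continuousAt.pow 2).const_mul 2).add
        ((hA 0 g0mem).continuousAt.mul (hA2 0 g0mem).continuousAt)
    have hval : (2 * d1 0 ^ 2 + g 0 * d2 0) ≠ 0 := by
      rw [show d1 0 = 1 from h1, h0]; norm_num
    have hev := hcont.eventually_ne hval
    filter_upwards [hgne, eventually_nhdsWithin_of_eventually_nhds hev] with x hx hx2
    intro hc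
    apply hx2
    have : (3 : ℝ) * g x * (2 * d1 x ^ 2 + g x * d2 x) = 0 := by linarith [hc]; 
    rcases mul_eq_zero.1 this with h | h
    · rcases mul_eq_zero.1 h with h' | h'
      · norm_num at h'
      · exact absurd h' hx
    · exact h
  have hD3ne : ∀ᶠ x in 𝓝[≠] (0:ℝ),
      6 * d1 x ^ 3 + 18 * g x * d1 x * d2 x + 3 * g x ^ 2 * d3 x ≠ 0 := by
    have hcont : ContinuousAt (fun x => 6 * d1 x ^ 3 + 18 * g x * d1 x * d2 x +
        3 * g x ^ 2 * d3 x) 0 :=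
      ((((hA1 0 g0mem).continuousAt.pow 3).const_mul (6:ℝ)).add
        ((((hA 0 g0mem).continuousAt.const_mul (18:ℝ)).mul
          (hA1 0 g0mem).continuousAt).mul (hA2 0 g0mem).continuousAt)).add
        ((((hA 0 g0mem).continuousAt.pow 2).const_mul (3:ℝ)).mul (hA3 0 g0mem).continuousAt)
    have hval : (6 * d1 0 ^ 3 + 18 * g 0 * d1 0 * d2 0 + 3 * g 0 ^ 2 * d3 0) ≠ 0 := by
      rw [h1, h0]; norm_num
    exact eventually_nhdsWithin_of_eventually_nhds (hcont.eventually_ne hval)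
  -- the innermost limit, by continuity
  have hid : iteratedDeriv 2 g 0 = d2 0 := by
    rw [iteratedDeriv_succ, iteratedDeriv_one]
  have T3 : Tendsto (fun x => (-2 * d1 x * d2 x - 4 * g x * d3 x - 2 * G x * d4 x) /
      (6 * d1 x ^ 3 + 18 * g x * d1 x * d2 x + 3 * g x ^ 2 * d3 x)) (𝓝[≠] (0:ℝ))
      (𝓝 (-(iteratedDeriv 2 g 0) / 3)) := by
    have hnum : ContinuousAt (fun x => -2 * d1 x * d2 x - 4 * g x * d3 x - 2 * G x * d4 x) 0 := by
      exact ((((hA1 0 g0mem).continuousAt.const_mul (-2:ℝ)).mul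
        (hA2 0 g0mem).continuousAt).sub
        (((hA 0 g0mem).continuousAt.const_mul (4:ℝ)).mul (hA3 0 g0mem).continuousAt)).sub
        (((hGd 0 g0mem).continuousAt.const_mul (2:ℝ)).mul (hA4 0 g0mem).continuousAt)
    have hden : ContinuousAt (fun x => 6 * d1 x ^ 3 + 18 * g x * d1 x * d2 x +
        3 * g x ^ 2 * d3 x) 0 := by
      exact ((((hA1 0 g0mem).continuousAt.pow 3).const_mul (6:ℝ)).add
        ((((hA 0 g0mem).continuousAt.const_mul (18:ℝ)).mul
          (hA1 0 g0mem).continuousAt).mul (hA2 0 g0mem).continuousAt)).add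
        ((((hA 0 g0mem).continuousAt.pow 2).const_mul (3:ℝ)).mul (hA3 0 g0mem).continuousAt)
    have hden0 : (6 * d1 0 ^ 3 + 18 * g 0 * d1 0 * d2 0 + 3 * g 0 ^ 2 * d3 0) = 6 := by
      rw [h1, h0]; norm_num
    have h : Tendsto (fun x => (-2 * d1 x * d2 x - 4 * g x * d3 x - 2 * G x * d4 x) /
        (6 * d1 x ^ 3 + 18 * g x * d1 x * d2 x + 3 * g x ^ 2 * d3 x)) (𝓝 (0:ℝ))
        (𝓝 ((-2 * d1 0 * d2 0 - 4 * g 0 * d3 0 - 2 * G 0 * d4 0) /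
          (6 * d1 0 ^ 3 + 18 * g 0 * d1 0 * d2 0 + 3 * g 0 ^ 2 * d3 0))) :=
      hnum.tendsto.div hden.tendsto (by rw [hden0]; norm_num)
    have hval : (-2 * d1 0 * d2 0 - 4 * g 0 * d3 0 - 2 * G 0 * d4 0) /
        (6 * d1 0 ^ 3 + 18 * g 0 * d1 0 * d2 0 + 3 * g 0 ^ 2 * d3 0) =
        -(iteratedDeriv 2 g 0) / 3 := by
      rw [hid, h1, h0, hG0]; ring
    rw [hval] at h
    exact h.mono_left (nhdsWithin_le_nhds (s := {(0:ℝ)}ᶜ))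
  -- l'Hôpital, three times
  have T2 : Tendsto (fun x => (-2 * g x * d2 x - 2 * G x * d3 x) /
      (6 * g x * d1 x ^ 2 + 3 * g x ^ 2 * d2 x)) (𝓝[≠] (0:ℝ))
      (𝓝 (-(iteratedDeriv 2 g 0) / 3)) := by
    refine HasDerivAt.lhopital_zero_nhdsNE ?_ ?_ ?_ tN2 tD2 T3
    · filter_upwards [hBev] with x hx using hN2 x hx
    · filter_upwards [hBev] with x hx using hD2 x hx
    · exact hD3ne
  have T1 : Tendsto (fun x => (-2 * G x * d2 x) / (3 * g x ^ 2 * d1 x)) (𝓝[≠] (0:ℝ))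
      (𝓝 (-(iteratedDeriv 2 g 0) / 3)) := by
    refine HasDerivAt.lhopital_zero_nhdsNE ?_ ?_ ?_ tN1 tD1 T2
    · filter_upwards [hBev] with x hx using hN1 x hx
    · filter_upwards [hBev] with x hx using hD1 x hx
    · exact hD2ne
  have T0 : Tendsto (fun x => (g x ^ 2 - 2 * G x * d1 x) / (g x ^ 3)) (𝓝[≠] (0:ℝ))
      (𝓝 (-(iteratedDeriv 2 g 0) / 3)) := by
    refine HasDerivAt.lhopital_zero_nhdsNE ?_ ?_ ?_ tN tD T1
    · filter_upwards [hBev] with x hx using hN x hx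
    · filter_upwards [hBev] with x hx using hD x hx
    · filter_upwards [hgne, eventually_nhdsWithin_of_eventually_nhds hd1ne] with x hx hx1
      positivity
  -- identify the derivative of G / g ^ 2 away from 0
  have key : (fun x => (g x ^ 2 - 2 * G x * d1 x) / (g x ^ 3)) =ᶠ[𝓝[≠] (0:ℝ)]
      (fun x => deriv (fun y => G y / (g y) ^ 2) x) := by
    filter_upwards [hBev, hgne] with x hx hgx
    have h := (hGd x hx).fun_div ((hgd x hx).fun_pow 2) (pow_ne_zero 2 hgx)
    rw [h.deriv]
    push_cast
    field_simp
  exact T0.congr' key
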